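/- Let V be an m-dimensional vector space over ZMod p with basis e_0, ..., e_{m-1}, and let C_1, ..., C_L be a USPM AIEP code over ZMod p (so that no sum of choices is zero and all sums are distinct). Then the cascaded code on all mL pairs {e_i·C_l : 0 ≤ i < m, 1 ≤ l ≤ L} has an injective sum map: the map from the product of all mL pairs to V sending a choice to the total sum is injective. -/

import Mathlib

/-- The cascaded code on all `m·L` scaled pairs `e i • C l` has an injective sum map:
choices from all `m·L` pairs yield `2^(mL)` distinct sums in `V`. -/
theorem stmt_11 (p m L : ℕ) [Fact p.Prime] (V : Type*) [AddCommGroup V]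
    [Module (ZMod p) V] (e : Module.Basis (Fin m) (ZMod p) V)
    (c : Fin L → ZMod p) (hc : ∀ l, c l ≠ 0)
    (hinj : Function.Injective
      (fun ε : Fin L → Bool => ∑ l, if ε l then -(c l) else c l)) :
    Function.Injective (fun ε : Fin m × Fin L → Bool =>
      ∑ il : Fin m × Fin L, (if ε il then -(c il.2) else c il.2) • e il.1) := by
  intro a b h
  simp only [Fintype.sum_prod_type, ← Finset.sum_smul] at h
  have h2 := congrArg (fun v => (e.repr v : Fin m → ZMod p)) h
  simp only [e.repr_sum_self] at h2
  have h' : ∀ i : Fin m,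
      (∑ l, if a (i, l) then -(c l) else c l) =
      (∑ l, if b (i, l) then -(c l) else c l) := fun i => congrFun h2 i

  funext il
  obtain ⟨i, l⟩ := il
  have := congrFun (hinj (h' i)) l
  simpa using this
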